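/- Co-area formula for the nonlocal norm: let f ∈ W_1^ν with f ≥ 0, and for t > 0 set S_t(f) = {x ∈ ℝ^d : f(x) > t}. Then ‖f‖_{W_1^ν} = ∫₀^∞ ( 2 Per_ν(S_t(f)) + |S_t(f)| ) dt, where |·| denotes d-dimensional Lebesgue measure. -/

import Mathlib

open MeasureTheory ENNReal Set Filter Topology

/-- The nonlocal Sobolev seminorm `[f]_{W_p^ν}` (as an extended nonnegative real):
`[f]_{W_p^ν} = (∫∫ |f(x+h)-f(x)|^p dx ν(dh))^(1/p)`. -/
noncomputable def nlSeminorm (d : ℕ) (p : ℝ) (ν : Measure (EuclideanSpace ℝ (Fin d)))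
    (f : EuclideanSpace ℝ (Fin d) → ℝ) : ℝ≥0∞ :=
  (∫⁻ h, (∫⁻ x, ENNReal.ofReal (|f (x + h) - f x| ^ p)) ∂ν) ^ (1 / p)

/-- The nonlocal Sobolev norm `‖f‖_{W_p^ν} = ‖f‖_{L^p} + [f]_{W_p^ν}`. -/
noncomputable def nlNorm (d : ℕ) (p : ℝ) (ν : Measure (EuclideanSpace ℝ (Fin d)))
    (f : EuclideanSpace ℝ (Fin d) → ℝ) : ℝ≥0∞ :=
  (∫⁻ x, ENNReal.ofReal (|f x| ^ p)) ^ (1 / p) + nlSeminorm d p ν f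

/-- Membership in the nonlocal Sobolev space `W_p^ν`. -/
def memW (d : ℕ) (p : ℝ) (ν : Measure (EuclideanSpace ℝ (Fin d)))
    (f : EuclideanSpace ℝ (Fin d) → ℝ) : Prop :=
  Measurable f ∧ nlNorm d p ν f < ⊤

/-- The `ν`-perimeter `Per_ν(E) = ∫_E ν(Eᶜ - x) dx`, where `Eᶜ - x = {y - x : y ∉ E}`. -/
noncomputable def perNu (d : ℕ) (ν : Measure (EuclideanSpace ℝ (Fin d)))
    (E : Set (EuclideanSpace ℝ (Fin d))) : ℝ≥0∞ :=
  ∫⁻ x in E, ν ((fun y => y - x) '' Eᶜ)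



lemma markov_fin (α : Type*) [MeasurableSpace α] (μ : Measure α) {g : α → ℝ≥0∞}
    (hg : AEMeasurable g μ) (hI : ∫⁻ x, g x ∂μ < ⊤) {c : ℝ≥0∞} (hc : c ≠ 0)
    {S : Set α} (hS : ∀ x ∈ S, c ≤ g x) : μ S < ⊤ := by
  have h1 : μ S ≤ μ {x | c ≤ g x} := measure_mono fun x hx => hS x hx
  have h2 := mul_meas_ge_le_lintegral₀ hg c
  by_contra h
  push_neg at h
  have : μ {x | c ≤ g x} = ⊤ := top_le_iff.mp (h.trans h1)
  rw [this, ENNReal.mul_top hc] at h2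
  exact hI.ne (top_le_iff.mp h2)

lemma sfin (d : ℕ) (ν : Measure (EuclideanSpace ℝ (Fin d)))
    (hint : ∫⁻ x, ENNReal.ofReal (min 1 ‖x‖) ∂ν < ⊤) : SFinite ν := by
  have hmeas : Measurable fun x : EuclideanSpace ℝ (Fin d) => ENNReal.ofReal (min 1 ‖x‖) :=
    (measurable_const.min measurable_norm).ennreal_ofReal
  have hsig : SigmaFinite (ν.restrict {0}ᶜ) := by
    refine ⟨⟨⟨fun n => {x | 1/(n+1) < ‖x‖} ∪ {0}, fun _ => trivial, fun n => ?_, ?_⟩⟩⟩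
    · have hsub : ({x : EuclideanSpace ℝ (Fin d) | 1/(n+1) < ‖x‖} ∪ {0}) ∩ ({0} : Set _)ᶜ
          ⊆ {x | 1/(n+1) < ‖x‖} := by
        rintro x ⟨hx | hx, hx0⟩
        · exact hx
        · exact absurd hx hx0
      rw [Measure.restrict_apply' (MeasurableSet.singleton 0).compl]
      refine lt_of_le_of_lt (measure_mono hsub) ?_
      refine markov_fin _ ν hmeas.aemeasurable hint
        (c := ENNReal.ofReal (min 1 (1/(n+1))))
        (ENNReal.ofReal_pos.mpr (by positivity)).ne' ?_
      intro x hx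
      exact ENNReal.ofReal_le_ofReal (min_le_min le_rfl (le_of_lt hx))
    · rw [eq_univ_iff_forall]
      intro x
      rcases eq_or_ne x 0 with h | h
      · exact mem_iUnion.mpr ⟨0, Or.inr h⟩
      · obtain ⟨n, hn⟩ := exists_nat_one_div_lt (norm_pos_iff.mpr h)
        exact mem_iUnion.mpr ⟨n, Or.inl hn⟩
  have hs : SFinite (ν.restrict {0}) := by rw [Measure.restrict_singleton]; infer_instance
  have : ν.restrict ({0} : Set _)ᶜ + ν.restrict {0} = ν :=
    Measure.restrict_compl_add_restrict (MeasurableSet.singleton 0)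
  rw [← this]
  infer_instance



lemma vol_Ico_inter (u v : ℝ) (hu : 0 ≤ u) :
    volume (Ico u v ∩ Ioi 0) = ENNReal.ofReal (v - u) := by
  apply le_antisymm
  · calc volume (Ico u v ∩ Ioi 0) ≤ volume (Ico u v) := measure_mono inter_subset_left
      _ = ENNReal.ofReal (v - u) := Real.volume_Ico
  · have hsub : Ico u v ⊆ (Ico u v ∩ Ioi 0) ∪ {0} := by
      intro s hs
      rcases lt_or_eq_of_le (hu.trans hs.1) with h | h
      · exact Or.inl ⟨hs, h⟩
      · exact Or.inr (mem_singleton_iff.mpr h.symm)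
    calc ENNReal.ofReal (v - u) = volume (Ico u v) := (Real.volume_Ico).symm
      _ ≤ volume ((Ico u v ∩ Ioi 0) ∪ {0}) := measure_mono hsub
      _ ≤ volume (Ico u v ∩ Ioi 0) + volume ({0} : Set ℝ) := measure_union_le _ _
      _ = volume (Ico u v ∩ Ioi 0) := by simp

lemma lint_abs (a b : ℝ) (ha : 0 ≤ a) (hb : 0 ≤ b) :
    ∫⁻ t in Ioi (0:ℝ),
      (({s : ℝ | s < a ∧ b ≤ s}).indicator 1 t + ({s : ℝ | s < b ∧ a ≤ s}).indicator 1 t)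
      = ENNReal.ofReal |a - b| := by
  have hset : ∀ p q : ℝ, {s : ℝ | s < p ∧ q ≤ s} = Ico q p := by
    intro p q; ext s; simp [Set.mem_Ico, and_comm]
  rw [hset, hset,
    lintegral_add_left ((measurable_one : Measurable (1 : ℝ → ℝ≥0∞)).indicator measurableSet_Ico),
    lintegral_indicator_one measurableSet_Ico, lintegral_indicator_one measurableSet_Ico,
    Measure.restrict_apply measurableSet_Ico, Measure.restrict_apply measurableSet_Ico,
    vol_Ico_inter b a hb, vol_Ico_inter a b ha]
  rcases le_total b a with h | h
  · rw [ENNReal.ofReal_of_nonpos (show b - a ≤ 0 by linarith), add_zero,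
      abs_of_nonneg (by linarith)]
  · rw [ENNReal.ofReal_of_nonpos (show a - b ≤ 0 by linarith), zero_add,
      abs_of_nonpos (by linarith), neg_sub]

section Main
variable {d : ℕ} {ν : Measure (EuclideanSpace ℝ (Fin d))} {f : EuclideanSpace ℝ (Fin d) → ℝ}

local notation "X" => EuclideanSpace ℝ (Fin d)

lemma seminorm_coarea [SFinite ν]
    (hf : Measurable f) (hfnn : ∀ x, 0 ≤ f x)
    (hL1 : ∫⁻ x, ENNReal.ofReal (f x) < ⊤) :
    ∫⁻ h, (∫⁻ x, ENNReal.ofReal |f (x + h) - f x|) ∂ν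
      = ∫⁻ t in Ioi (0:ℝ), 2 * perNu d ν {x | t < f x} := by
  -- notation for the double-indicator integrand
  set K : X → X → ℝ → ℝ≥0∞ := fun h x t =>
    ({s : ℝ | s < f (x + h) ∧ f x ≤ s}).indicator 1 t
      + ({s : ℝ | s < f x ∧ f (x + h) ≤ s}).indicator 1 t with hK
  have hEt : ∀ t : ℝ, MeasurableSet {x : X | t < f x} := fun t =>
    measurableSet_lt measurable_const hf
  have hEtfin : ∀ t : ℝ, 0 < t → volume {x : X | t < f x} < ⊤ := by
    intro t ht
    have h2 := mul_meas_ge_le_lintegral₀ (μ := volume) (hf.ennreal_ofReal).aemeasurable (ENNReal.ofReal t)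
    have hsub : volume {x : X | t < f x}
        ≤ volume {x : X | ENNReal.ofReal t ≤ ENNReal.ofReal (f x)} :=
      measure_mono fun x hx => ENNReal.ofReal_le_ofReal (le_of_lt hx)
    by_contra hcon
    push_neg at hcon
    have htop : volume {x : X | ENNReal.ofReal t ≤ ENNReal.ofReal (f x)} = ⊤ :=
      top_le_iff.mp (hcon.trans hsub)
    rw [htop, ENNReal.mul_top (ENNReal.ofReal_pos.mpr ht).ne'] at h2
    exact hL1.ne (top_le_iff.mp h2)
  -- Step 1: pointwise layer-cake for the absolute difference
  have step1 : ∀ h : X, ∫⁻ x, ENNReal.ofReal |f (x + h) - f x|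
      = ∫⁻ x, ∫⁻ t in Ioi (0:ℝ), K h x t := by
    intro h
    refine lintegral_congr fun x => ?_
    exact (lint_abs (f (x + h)) (f x) (hfnn _) (hfnn _)).symm
  -- Step 2: swap x and t (fixed h)
  have step2 : ∀ h : X, ∫⁻ x, ∫⁻ t in Ioi (0:ℝ), K h x t
      = ∫⁻ t in Ioi (0:ℝ), ∫⁻ x, K h x t := by
    intro h
    refine lintegral_lintegral_swap ?_
    have hm : Measurable (Function.uncurry (K h)) := by
      have h1 : MeasurableSet {q : X × ℝ | q.2 < f (q.1 + h) ∧ f q.1 ≤ q.2} := by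
        rw [Set.setOf_and]
        exact (measurableSet_lt measurable_snd ((hf.comp (measurable_fst.add_const h)))).inter
          (measurableSet_le (hf.comp measurable_fst) measurable_snd)
      have h2 : MeasurableSet {q : X × ℝ | q.2 < f q.1 ∧ f (q.1 + h) ≤ q.2} := by
        rw [Set.setOf_and]
        exact (measurableSet_lt measurable_snd (hf.comp measurable_fst)).inter
          (measurableSet_le ((hf.comp (measurable_fst.add_const h))) measurable_snd)
      have : Function.uncurry (K h) = fun q : X × ℝ =>
          ({q : X × ℝ | q.2 < f (q.1 + h) ∧ f q.1 ≤ q.2}).indicator 1 q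
            + ({q : X × ℝ | q.2 < f q.1 ∧ f (q.1 + h) ≤ q.2}).indicator 1 q := by
        funext q
        simp [Function.uncurry, hK, Set.indicator_apply]
      rw [this]
      exact (measurable_one.indicator h1).add (measurable_one.indicator h2)
    exact hm.aemeasurable
  -- Step 3: for fixed h and t > 0, evaluate the inner x-integral
  have step3 : ∀ (h : X) (t : ℝ), 0 < t →
      ∫⁻ x, K h x t = 2 * volume {x : X | t < f x ∧ f (x + h) ≤ t} := by
    intro h t ht
    set Et : Set X := {x | t < f x} with hEtdef
    set T : Set X := (· + h) ⁻¹' Et with hT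
    have hTm : MeasurableSet T := (hEt t).preimage (measurable_add_const h)
    have hA : {x : X | t < f (x + h) ∧ f x ≤ t} = T \ Et := by
      ext x
      simp [hT, hEtdef, Set.mem_diff, not_lt]
    have hB : {x : X | t < f x ∧ f (x + h) ≤ t} = Et \ T := by
      ext x
      simp [hT, hEtdef, Set.mem_diff, not_lt]
    have hvolT : volume T = volume Et := measure_preimage_add_right volume h Et
    have h1 : volume (T ∩ Et) + volume (T \ Et) = volume T := measure_inter_add_diff T (hEt t)
    have h2 : volume (Et ∩ T) + volume (Et \ T) = volume Et := measure_inter_add_diff Et hTm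
    have hfin : volume (T ∩ Et) ≠ ⊤ := by
      refine ((measure_mono inter_subset_right).trans_lt (hEtfin t ht)).ne
    have hcancel : volume (T \ Et) = volume (Et \ T) := by
      have : volume (T ∩ Et) + volume (T \ Et) = volume (T ∩ Et) + volume (Et \ T) := by
        rw [h1, hvolT, ← h2, inter_comm]
      exact (ENNReal.add_right_inj hfin).mp this
    have hmA : MeasurableSet {x : X | t < f (x + h) ∧ f x ≤ t} := by
      rw [hA]; exact hTm.diff (hEt t)
    have hmB : MeasurableSet {x : X | t < f x ∧ f (x + h) ≤ t} := by
      rw [hB]; exact (hEt t).diff hTm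
    have hKx : (fun x => K h x t) = fun x =>
        ({x : X | t < f (x + h) ∧ f x ≤ t}).indicator 1 x
          + ({x : X | t < f x ∧ f (x + h) ≤ t}).indicator 1 x := by
      funext x
      simp [hK, Set.indicator_apply]
    rw [hKx, lintegral_add_left (measurable_one.indicator hmA),
      lintegral_indicator_one hmA, lintegral_indicator_one hmB, hA, hB, hcancel]
    exact (two_mul _).symm
  -- image set identity
  have himg : ∀ (t : ℝ) (x : X),
      ((fun y => y - x) '' {y : X | t < f y}ᶜ) = {h : X | f (x + h) ≤ t} := by
    intro t x
    ext h
    constructor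
    · rintro ⟨y, hy, rfl⟩
      have hxy : x + (y - x) = y := by abel
      simp only [mem_compl_iff, mem_setOf_eq, not_lt] at hy
      simpa [hxy] using hy
    · intro hh
      exact ⟨x + h, by simpa using not_lt.mpr hh, add_sub_cancel_left x h⟩
  -- Step 4 : evaluate the inner double integral for fixed t > 0
  have step4 : ∀ t : ℝ, 0 < t →
      ∫⁻ h, (∫⁻ x, K h x t) ∂ν = 2 * perNu d ν {x | t < f x} := by
    intro t ht
    have e1 : ∫⁻ h, (∫⁻ x, K h x t) ∂ν
        = ∫⁻ h, 2 * volume {x : X | t < f x ∧ f (x + h) ≤ t} ∂ν :=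
      lintegral_congr fun h => step3 h t ht
    rw [e1, lintegral_const_mul' 2 _ (by norm_num)]
    congr 1
    set Jt : X → X → ℝ≥0∞ := fun h x =>
      ({p : X × X | t < f p.2 ∧ f (p.2 + p.1) ≤ t}).indicator 1 (h, x) with hJt
    have hmB : ∀ h : X, MeasurableSet {x : X | t < f x ∧ f (x + h) ≤ t} := by
      intro h
      rw [Set.setOf_and]
      exact (measurableSet_lt measurable_const hf).inter
        (measurableSet_le (hf.comp (measurable_add_const h)) measurable_const)
    have hstep : ∀ h : X, volume {x : X | t < f x ∧ f (x + h) ≤ t} = ∫⁻ x, Jt h x := by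
      intro h
      rw [← lintegral_indicator_one (hmB h)]
      refine lintegral_congr fun x => ?_
      simp [hJt, Set.indicator_apply]
    have e2 : ∫⁻ h, volume {x : X | t < f x ∧ f (x + h) ≤ t} ∂ν
        = ∫⁻ h, (∫⁻ x, Jt h x) ∂ν := lintegral_congr hstep
    rw [e2]
    have hmJ : Measurable (Function.uncurry Jt) := by
      have hS : MeasurableSet {p : X × X | t < f p.2 ∧ f (p.2 + p.1) ≤ t} := by
        rw [Set.setOf_and]
        exact (measurableSet_lt measurable_const (hf.comp measurable_snd)).inter
          (measurableSet_le (hf.comp (measurable_snd.add measurable_fst)) measurable_const)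
      have : Function.uncurry Jt
          = ({p : X × X | t < f p.2 ∧ f (p.2 + p.1) ≤ t}).indicator 1 := by
        funext p
        simp [Function.uncurry, hJt]
      rw [this]
      exact measurable_one.indicator hS
    rw [lintegral_lintegral_swap hmJ.aemeasurable]
    have hinner : ∀ x : X, ∫⁻ h, Jt h x ∂ν
        = Set.indicator {x : X | t < f x}
            (fun x => ν ((fun y => y - x) '' {y : X | t < f y}ᶜ)) x := by
      intro x
      by_cases hx : t < f x
      · have h1 : (fun h => Jt h x) = ({h : X | f (x + h) ≤ t}).indicator 1 := by
          funext h
          simp [hJt, Set.indicator_apply, hx]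
        have h2 : MeasurableSet {h : X | f (x + h) ≤ t} :=
          measurableSet_le (hf.comp (measurable_const_add x)) measurable_const
        rw [h1, lintegral_indicator_one h2,
          Set.indicator_of_mem (show x ∈ {x : X | t < f x} from hx), himg t x]
      · have h1 : (fun h => Jt h x) = fun _ => 0 := by
          funext h
          simp [hJt, Set.indicator_apply, hx]
        rw [h1, lintegral_zero, Set.indicator_of_notMem (show x ∉ {x : X | t < f x} from hx)]
    have e3 : ∫⁻ x, (∫⁻ h, Jt h x ∂ν)
        = ∫⁻ x, Set.indicator {x : X | t < f x}
            (fun x => ν ((fun y => y - x) '' {y : X | t < f y}ᶜ)) x := lintegral_congr hinner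
    rw [e3, lintegral_indicator (hEt t)]
    rfl
  -- put everything together
  calc ∫⁻ h, (∫⁻ x, ENNReal.ofReal |f (x + h) - f x|) ∂ν
      = ∫⁻ h, (∫⁻ t in Ioi (0:ℝ), ∫⁻ x, K h x t) ∂ν :=
        lintegral_congr fun h => (step1 h).trans (step2 h)
    _ = ∫⁻ t in Ioi (0:ℝ), (∫⁻ h, (∫⁻ x, K h x t) ∂ν) := by
        refine lintegral_lintegral_swap ?_
        have m1 : Measurable fun q : (X × ℝ) × X => f (q.2 + q.1.1) :=
          hf.comp (measurable_snd.add measurable_fst.fst)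
        have m2 : Measurable fun q : (X × ℝ) × X => q.1.2 := measurable_fst.snd
        have m3 : Measurable fun q : (X × ℝ) × X => f q.2 := hf.comp measurable_snd
        have hSA : MeasurableSet {q : (X × ℝ) × X | q.1.2 < f (q.2 + q.1.1) ∧ f q.2 ≤ q.1.2} := by
          rw [Set.setOf_and]
          exact (measurableSet_lt m2 m1).inter (measurableSet_le m3 m2)
        have hSB : MeasurableSet {q : (X × ℝ) × X | q.1.2 < f q.2 ∧ f (q.2 + q.1.1) ≤ q.1.2} := by
          rw [Set.setOf_and]
          refine MeasurableSet.inter ?_ ?_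
          · exact measurableSet_lt m2 m3
          · exact measurableSet_le m1 m2
        have hGm : Measurable fun q : (X × ℝ) × X =>
            ({q : (X × ℝ) × X | q.1.2 < f (q.2 + q.1.1) ∧ f q.2 ≤ q.1.2}).indicator
                (1 : ((X × ℝ) × X) → ℝ≥0∞) q
              + ({q : (X × ℝ) × X | q.1.2 < f q.2 ∧ f (q.2 + q.1.1) ≤ q.1.2}).indicator
                (1 : ((X × ℝ) × X) → ℝ≥0∞) q := by
          exact (measurable_one.indicator hSA).add (measurable_one.indicator hSB)
        have hmeas : Measurable fun p : X × ℝ => ∫⁻ x, K p.1 x p.2 := by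
          have heq : (fun p : X × ℝ => ∫⁻ x, K p.1 x p.2)
              = fun p : X × ℝ => ∫⁻ x : X,
                  (({q : (X × ℝ) × X | q.1.2 < f (q.2 + q.1.1) ∧ f q.2 ≤ q.1.2}).indicator 1 (p, x)
                    + ({q : (X × ℝ) × X | q.1.2 < f q.2 ∧ f (q.2 + q.1.1) ≤ q.1.2}).indicator 1 (p, x)) := by
            funext p
            refine lintegral_congr fun x => ?_
            simp [hK, Set.indicator_apply]
          rw [heq]
          exact hGm.lintegral_prod_right'
        exact hmeas.aemeasurable
    _ = ∫⁻ t in Ioi (0:ℝ), 2 * perNu d ν {x | t < f x} := by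
        refine setLIntegral_congr_fun measurableSet_Ioi (fun t ht => ?_)
        exact step4 t ht

end Main

/-- Co-area formula: for `0 ≤ f ∈ W_1^ν` and `S_t(f) = {f > t}`,
`‖f‖_{W_1^ν} = ∫₀^∞ (2 Per_ν(S_t(f)) + |S_t(f)|) dt`. -/
theorem statement_12 (d : ℕ) (hd : 1 ≤ d)
    (ν : Measure (EuclideanSpace ℝ (Fin d)))
    (hint : ∫⁻ x, ENNReal.ofReal (min 1 ‖x‖) ∂ν < ⊤)
    (f : EuclideanSpace ℝ (Fin d) → ℝ)
    (hf : memW d 1 ν f) (hfnn : ∀ x, 0 ≤ f x) :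
    nlNorm d 1 ν f =
      ∫⁻ t in Ioi (0 : ℝ),
        (2 * perNu d ν {x | t < f x} + volume {x | t < f x}) := by
  obtain ⟨hfm, hlt⟩ := hf
  have hsf : SFinite ν := sfin d ν hint
  have habs : ∀ x, |f x| = f x := fun x => abs_of_nonneg (hfnn x)
  have hnorm : nlNorm d 1 ν f
      = (∫⁻ x, ENNReal.ofReal (f x))
        + ∫⁻ h, (∫⁻ x, ENNReal.ofReal |f (x + h) - f x|) ∂ν := by
    rw [nlNorm, nlSeminorm]
    norm_num [Real.rpow_one]
    congr 1
    exact lintegral_congr fun x => by rw [habs x]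
  have hL1 : ∫⁻ x, ENNReal.ofReal (f x) < ⊤ := by
    rw [hnorm] at hlt
    exact (ENNReal.add_lt_top.mp hlt).1
  have hvolm : Measurable fun t : ℝ => volume {x : EuclideanSpace ℝ (Fin d) | t < f x} :=
    Antitone.measurable fun s t hst => measure_mono fun x hx => lt_of_le_of_lt hst hx
  rw [hnorm, seminorm_coarea hfm hfnn hL1,
    lintegral_eq_lintegral_meas_lt volume (ae_of_all _ hfnn) hfm.aemeasurable, add_comm,
    ← lintegral_add_right _ hvolm]
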